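/- Let X be a ringed space, F a coherent O_X-module, I ⊆ O_X a finitely generated ideal sheaf, and x ∈ X a point such that the stalk I_x is generated by an F_x-regular sequence. Then there is an open neighborhood U of x such that I|_U is generated by an F|_U-regular sequence of global sections over U. -/

import Mathlib

open CategoryTheory TopologicalSpace Opposite

universe u

variable (X : TopCat.{u}) (O : TopCat.Presheaf CommRingCat.{u} X)
  (F : TopCat.Presheaf AddCommGrpCat.{u} X)
  [∀ U : (Opens X)ᵒᵖ, Module (O.obj U) (F.obj U)]
  (I : ∀ U : (Opens X)ᵒᵖ, Ideal (O.obj U))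

/-- The germs at `y` of the sections `f j` generate the stalk `I_y`: every local section of
`I` is, on some smaller neighbourhood of `y`, an `O`-linear combination of the `f j`. -/
def LocallyGeneratesAt {c : ℕ} {U : Opens X} (f : Fin c → O.obj (op U)) (y : X) : Prop :=
  ∀ (V : Opens X), y ∈ V → ∀ a : O.obj (op V), a ∈ I (op V) →
    ∃ (W : Opens X) (_ : y ∈ W) (hWV : W ≤ V) (hWU : W ≤ U)
      (r : Fin c → O.obj (op W)),
      O.map (homOfLE hWV).op a = ∑ j, r j * O.map (homOfLE hWU).op (f j)

/-- The germs at `y` of the sections `f j` form an `F_y`-regular sequence: for each `i`,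
multiplication by (the germ of) `f i` is injective on `F_y / (f_1, …, f_{i-1}) F_y`.  This is
phrased elementarily in terms of germs of sections. -/
def RegularSeqAt {c : ℕ} {U : Opens X} (f : Fin c → O.obj (op U)) (y : X) : Prop :=
  ∀ (i : Fin c) (V : Opens X), y ∈ V → ∀ (hVU : V ≤ U) (m : F.obj (op V)),
    (∃ (W : Opens X) (_ : y ∈ W) (hWV : W ≤ V) (mm : Fin c → F.obj (op W)),
        O.map (homOfLE (hWV.trans hVU)).op (f i) • F.map (homOfLE hWV).op m =
          ∑ j ∈ Finset.univ.filter (fun j : Fin c => j < i),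
            O.map (homOfLE (hWV.trans hVU)).op (f j) • mm j) →
    ∃ (W : Opens X) (_ : y ∈ W) (hWV : W ≤ V) (mm : Fin c → F.obj (op W)),
      F.map (homOfLE hWV).op m =
        ∑ j ∈ Finset.univ.filter (fun j : Fin c => j < i),
          O.map (homOfLE (hWV.trans hVU)).op (f j) • mm j

lemma resF {U V W : Opens X} (h1 : V ≤ U) (h2 : W ≤ V) (m : F.obj (op U)) :
    F.map (homOfLE h2).op (F.map (homOfLE h1).op m) = F.map (homOfLE (h2.trans h1)).op m := by
  rw [← CategoryTheory.comp_apply, ← F.map_comp]; rfl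

lemma resO {U V W : Opens X} (h1 : V ≤ U) (h2 : W ≤ V) (m : O.obj (op U)) :
    O.map (homOfLE h2).op (O.map (homOfLE h1).op m) = O.map (homOfLE (h2.trans h1)).op m := by
  rw [← CategoryTheory.comp_apply, ← O.map_comp]; rfl

lemma resF_self {U : Opens X} (h : U ≤ U) (m : F.obj (op U)) :
    F.map (homOfLE h).op m = m := by
  have : (homOfLE h).op = 𝟙 (op U) := rfl
  rw [this, F.map_id]; rfl

lemma mem_finset_inf {ι : Type} (t : Finset ι) (W : ι → Opens X) (y : X)
    (h : ∀ l ∈ t, y ∈ W l) : y ∈ t.inf W := by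
  classical
  induction t using Finset.induction with
  | empty => simp
  | insert _ _ hnot ih =>
    rw [Finset.inf_insert]
    exact ⟨h _ (Finset.mem_insert_self _ _), ih fun l hl => h _ (Finset.mem_insert_of_mem hl)⟩

theorem regular_ideal_is_local
    (hO : O.IsSheaf) (hF : F.IsSheaf)
    (hcomp : ∀ {U V : (Opens X)ᵒᵖ} (h : U ⟶ V) (r : O.obj U) (m : F.obj U),
      F.map h (r • m) = O.map h r • F.map h m)
    (hIres : ∀ {U V : (Opens X)ᵒᵖ} (h : U ⟶ V), ∀ a ∈ I U, O.map h a ∈ I V)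
    -- `F` is of finite type
    (hFft : ∀ x : X, ∃ (U : Opens X) (_ : x ∈ U) (nn : ℕ) (s : Fin nn → F.obj (op U)),
      ∀ (V : Opens X) (hVU : V ≤ U) (m : F.obj (op V)) (y : X), y ∈ V →
        ∃ (W : Opens X) (_ : y ∈ W) (hWV : W ≤ V) (r : Fin nn → O.obj (op W)),
          F.map (homOfLE hWV).op m = ∑ j, r j • F.map (homOfLE (hWV.trans hVU)).op (s j))
    -- kernels of maps from finite free modules to `F` are of finite type (coherence)
    (hker : ∀ (U : Opens X) (nn : ℕ) (s : Fin nn → F.obj (op U)) (x : X), x ∈ U →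
      ∃ (W : Opens X) (_ : x ∈ W) (hWU : W ≤ U) (mm : ℕ)
        (κ : Fin mm → Fin nn → O.obj (op W)),
        (∀ l, ∑ j, κ l j • F.map (homOfLE hWU).op (s j) = 0) ∧
        ∀ (V : Opens X) (hVW : V ≤ W) (r : Fin nn → O.obj (op V)),
          (∑ j, r j • F.map (homOfLE (hVW.trans hWU)).op (s j) = 0) →
          ∀ (y : X), y ∈ V →
            ∃ (W' : Opens X) (_ : y ∈ W') (hW'V : W' ≤ V) (a : Fin mm → O.obj (op W')),
              ∀ j, O.map (homOfLE hW'V).op (r j) =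
                ∑ l, a l * O.map (homOfLE (hW'V.trans hVW)).op (κ l j))
    -- `I` is a finitely generated ideal sheaf
    (hIfg : ∀ x : X, ∃ (U : Opens X) (_ : x ∈ U) (c : ℕ) (f : Fin c → O.obj (op U)),
      (∀ j, f j ∈ I (op U)) ∧ ∀ y ∈ U, LocallyGeneratesAt X O I f y)
    -- at the point `x`, the stalk `I_x` is generated by an `F_x`-regular sequence
    (x : X)
    (hx : ∃ (U : Opens X) (_ : x ∈ U) (c : ℕ) (f : Fin c → O.obj (op U)),
      (∀ j, f j ∈ I (op U)) ∧ LocallyGeneratesAt X O I f x ∧ RegularSeqAt X O F f x) :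
    ∃ (U : Opens X) (_ : x ∈ U) (c : ℕ) (f : Fin c → O.obj (op U)),
      (∀ j, f j ∈ I (op U)) ∧
        ∀ y ∈ U, LocallyGeneratesAt X O I f y ∧ RegularSeqAt X O F f y := by
  classical
  obtain ⟨U₀, hxU₀, n, s, hs⟩ := hFft x
  obtain ⟨U₁, hxU₁, c, f, hfI, hfgen, hfreg⟩ := hx
  obtain ⟨Ug, hxUg, cg, g, hgI, hggen⟩ := hIfg x
  have hU₂₀ : U₀ ⊓ U₁ ≤ U₀ := inf_le_left
  have hU₂₁ : U₀ ⊓ U₁ ≤ U₁ := inf_le_right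
  have hxU₂ : x ∈ U₀ ⊓ U₁ := ⟨hxU₀, hxU₁⟩
  -- Step A : express the generators `g` of `I` near `x` in terms of `f`
  have hA : ∀ k : Fin cg, ∃ (W : Opens X) (_ : x ∈ W) (hWV : W ≤ Ug) (hWU : W ≤ U₁)
      (r : Fin c → O.obj (op W)),
      O.map (homOfLE hWV).op (g k) = ∑ j, r j * O.map (homOfLE hWU).op (f j) :=
    fun k => hfgen Ug hxUg (g k) (hgI k)
  choose WA hxWA hWAg hWA1 rA hrA using hA
  -- Step B : for each `i`, a neighbourhood on which the `i`-th regularity step holds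
  have key : ∀ i : Fin c, ∃ (N : Opens X) (_ : x ∈ N) (hN1 : N ≤ U₁),
      ∀ (y : X), y ∈ N → ∀ (V : Opens X), y ∈ V → ∀ (hVN : V ≤ N) (m : F.obj (op V)),
      (∃ (W : Opens X) (_ : y ∈ W) (hWV : W ≤ V) (mm : Fin c → F.obj (op W)),
          O.map (homOfLE ((hWV.trans hVN).trans hN1)).op (f i) • F.map (homOfLE hWV).op m =
            ∑ j ∈ Finset.univ.filter (fun j : Fin c => j < i),
              O.map (homOfLE ((hWV.trans hVN).trans hN1)).op (f j) • mm j) →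
      ∃ (W : Opens X) (_ : y ∈ W) (hWV : W ≤ V) (mm : Fin c → F.obj (op W)),
        F.map (homOfLE hWV).op m =
          ∑ j ∈ Finset.univ.filter (fun j : Fin c => j < i),
            O.map (homOfLE ((hWV.trans hVN).trans hN1)).op (f j) • mm j := by
    intro i
    set e : (Fin n ⊕ Fin c × Fin n) ≃ Fin (n + c * n) :=
      (Equiv.sumCongr (Equiv.refl (Fin n)) finProdFinEquiv).trans finSumFinEquiv with he
    set VV : Fin n ⊕ Fin c × Fin n → F.obj (op (U₀ ⊓ U₁)) := Sum.elim
      (fun j => O.map (homOfLE hU₂₁).op (f i) • F.map (homOfLE hU₂₀).op (s j))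
      (fun p => (if p.1 < i then O.map (homOfLE hU₂₁).op (f p.1) else 0) •
        F.map (homOfLE hU₂₀).op (s p.2)) with hVV
    obtain ⟨Wk, hxWk, hWkU₂, mk, κ, hκ0, hκgen⟩ :=
      hker (U₀ ⊓ U₁) (n + c * n) (fun t => VV (e.symm t)) x hxU₂
    -- reindexing/splitting lemma
    have sum_split : ∀ (W' : Opens X) (hW' : W' ≤ U₀ ⊓ U₁) (R : Fin (n + c*n) → O.obj (op W')),
        ∑ t, R t • F.map (homOfLE hW').op (VV (e.symm t)) =
          O.map (homOfLE (hW'.trans hU₂₁)).op (f i) •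
            (∑ j, R (e (.inl j)) • F.map (homOfLE (hW'.trans hU₂₀)).op (s j))
          + ∑ k ∈ Finset.univ.filter (fun k : Fin c => k < i),
              O.map (homOfLE (hW'.trans hU₂₁)).op (f k) •
                (∑ j, R (e (.inr (k, j))) • F.map (homOfLE (hW'.trans hU₂₀)).op (s j)) := by
      intro W' hW' R
      rw [← Equiv.sum_comp e (fun t => R t • F.map (homOfLE hW').op (VV (e.symm t)))]
      simp only [Equiv.symm_apply_apply]
      rw [Fintype.sum_sum_type]
      congr 1
      · rw [Finset.smul_sum]
        refine Finset.sum_congr rfl fun j _ => ?_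
        simp only [hVV, Sum.elim_inl]
        rw [hcomp, resO X O, resF X F, smul_comm]
      · rw [Fintype.sum_prod_type, Finset.sum_filter]
        refine Finset.sum_congr rfl fun k _ => ?_
        by_cases h : k < i
        · simp only [hVV, Sum.elim_inr, if_pos h, hcomp, resO X O, resF X F, Finset.smul_sum]
          refine Finset.sum_congr rfl fun j _ => ?_
          rw [smul_comm]
        · simp only [hVV, Sum.elim_inr, if_neg h, zero_smul, map_zero, smul_zero,
            Finset.sum_const_zero]
    -- the candidate elements of the kernel satisfy the regularity hypothesis at x
    have hreg_in : ∀ l : Fin mk,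
        O.map (homOfLE (hWkU₂.trans hU₂₁)).op (f i) •
          (∑ j, κ l (e (.inl j)) • F.map (homOfLE (hWkU₂.trans hU₂₀)).op (s j)) =
        ∑ k ∈ Finset.univ.filter (fun k : Fin c => k < i),
          O.map (homOfLE (hWkU₂.trans hU₂₁)).op (f k) •
            (∑ j, (-(κ l (e (.inr (k, j))))) • F.map (homOfLE (hWkU₂.trans hU₂₀)).op (s j)) := by
      intro l
      have h0 := hκ0 l
      rw [sum_split Wk hWkU₂ (κ l)] at h0
      have h1 := eq_neg_of_add_eq_zero_left h0
      rw [h1]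
      simp only [neg_smul, Finset.sum_neg_distrib, smul_neg]
    -- apply regularity at x
    have hWB : ∀ l : Fin mk, ∃ (W' : Opens X) (_ : x ∈ W') (hW'V : W' ≤ Wk)
        (mm : Fin c → F.obj (op W')),
        F.map (homOfLE hW'V).op
            (∑ j, κ l (e (.inl j)) • F.map (homOfLE (hWkU₂.trans hU₂₀)).op (s j)) =
          ∑ k ∈ Finset.univ.filter (fun k : Fin c => k < i),
            O.map (homOfLE (hW'V.trans (hWkU₂.trans hU₂₁))).op (f k) • mm k := by
      intro l
      apply hfreg i Wk hxWk (hWkU₂.trans hU₂₁)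
      refine ⟨Wk, hxWk, le_refl _,
        (fun k => ∑ j, (-(κ l (e (.inr (k, j))))) • F.map (homOfLE (hWkU₂.trans hU₂₀)).op (s j)),
        ?_⟩
      rw [resF_self]
      exact hreg_in l
    choose WB hxWB hWBWk MM hMM using hWB
    refine ⟨Wk ⊓ Finset.univ.inf WB,
      ⟨hxWk, mem_finset_inf X _ _ _ (fun l _ => hxWB l)⟩,
      inf_le_left.trans (hWkU₂.trans hU₂₁), ?_⟩
    rintro y hyN V hyV hVN m ⟨W, hyW, hWV, mm, hrel⟩
    have hWU₀ : W ≤ U₀ := (hWV.trans (hVN.trans inf_le_left)).trans (hWkU₂.trans hU₂₀)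
    obtain ⟨W₁, hyW₁, hW₁W, r0, hr0⟩ := hs W hWU₀ (F.map (homOfLE hWV).op m) y hyW
    have hq' : ∀ k : Fin c, ∃ (W' : Opens X) (_ : y ∈ W') (hW'W : W' ≤ W)
        (r : Fin n → O.obj (op W')),
        F.map (homOfLE hW'W).op (mm k) =
          ∑ j, r j • F.map (homOfLE (hW'W.trans hWU₀)).op (s j) :=
      fun k => hs W hWU₀ (mm k) y hyW
    choose Wq hyWq hWqW q hq using hq'
    have hyWa : y ∈ W₁ ⊓ Finset.univ.inf Wq :=
      ⟨hyW₁, mem_finset_inf X _ _ _ (fun k _ => hyWq k)⟩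
    have hWaW₁ : W₁ ⊓ Finset.univ.inf Wq ≤ W₁ := inf_le_left
    have hWaWq : ∀ k, W₁ ⊓ Finset.univ.inf Wq ≤ Wq k :=
      fun k => inf_le_right.trans (Finset.inf_le (Finset.mem_univ k))
    have hWaW : W₁ ⊓ Finset.univ.inf Wq ≤ W := hWaW₁.trans hW₁W
    have hWaWk : W₁ ⊓ Finset.univ.inf Wq ≤ Wk := (hWaW.trans (hWV.trans hVN)).trans inf_le_left
    set R : Fin (n + c * n) → O.obj (op (W₁ ⊓ Finset.univ.inf Wq)) := fun t => Sum.elim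
      (fun j => O.map (homOfLE hWaW₁).op (r0 j))
      (fun p => -(O.map (homOfLE (hWaWq p.1)).op (q p.1 p.2))) (e.symm t) with hR
    have hA' : (∑ j, R (e (.inl j)) •
          F.map (homOfLE ((hWaWk.trans hWkU₂).trans hU₂₀)).op (s j)) =
        F.map (homOfLE (hWaW.trans hWV)).op m := by
      have h2 := congrArg (F.map (homOfLE hWaW₁).op) hr0
      simp only [map_sum, hcomp, resF X F, resO X O] at h2
      simp only [hR, Equiv.symm_apply_apply, Sum.elim_inl]
      exact h2.symm
    have hB' : ∀ k : Fin c, (∑ j, R (e (.inr (k, j))) •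
          F.map (homOfLE ((hWaWk.trans hWkU₂).trans hU₂₀)).op (s j)) =
        -(F.map (homOfLE hWaW).op (mm k)) := by
      intro k
      have h2 := congrArg (F.map (homOfLE (hWaWq k)).op) (hq k)
      simp only [map_sum, hcomp, resF X F, resO X O] at h2
      simp only [hR, Equiv.symm_apply_apply, Sum.elim_inr, neg_smul, Finset.sum_neg_distrib]
      exact congrArg Neg.neg h2.symm
    have hRrel : ∑ t, R t •
        F.map (homOfLE (hWaWk.trans hWkU₂)).op ((fun t => VV (e.symm t)) t) = 0 := by
      have := sum_split (W₁ ⊓ Finset.univ.inf Wq) (hWaWk.trans hWkU₂) R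
      rw [this, hA']
      simp only [hB', smul_neg, Finset.sum_neg_distrib]
      rw [add_neg_eq_zero]
      have h3 := congrArg (F.map (homOfLE hWaW).op) hrel
      simp only [map_sum, hcomp, resF X F, resO X O] at h3
      exact h3
    obtain ⟨W₂, hyW₂, hW₂Wa, α, hα⟩ := hκgen (W₁ ⊓ Finset.univ.inf Wq) hWaWk R hRrel y hyWa
    have hW₂WB : ∀ l, W₂ ≤ WB l := fun l =>
      ((hW₂Wa.trans (hWaW.trans (hWV.trans hVN))).trans inf_le_right).trans
        (Finset.inf_le (Finset.mem_univ l))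
    refine ⟨W₂, hyW₂, hW₂Wa.trans (hWaW.trans hWV),
      fun k => ∑ l, α l • F.map (homOfLE (hW₂WB l)).op (MM l k), ?_⟩
    calc F.map (homOfLE (hW₂Wa.trans (hWaW.trans hWV))).op m
        = ∑ j, O.map (homOfLE hW₂Wa).op (R (e (.inl j))) •
            F.map (homOfLE (hW₂Wa.trans ((hWaWk.trans hWkU₂).trans hU₂₀))).op (s j) := by
          have g1 := congrArg (F.map (homOfLE hW₂Wa).op) hA'
          simp only [map_sum, hcomp, resF X F, resO X O] at g1
          exact g1.symm
      _ = ∑ j, (∑ l, α l * O.map (homOfLE (hW₂Wa.trans hWaWk)).op (κ l (e (.inl j)))) •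
            F.map (homOfLE (hW₂Wa.trans ((hWaWk.trans hWkU₂).trans hU₂₀))).op (s j) := by
          refine Finset.sum_congr rfl fun j _ => ?_
          rw [hα]
      _ = ∑ l, α l • ∑ j, O.map (homOfLE (hW₂Wa.trans hWaWk)).op (κ l (e (.inl j))) •
            F.map (homOfLE (hW₂Wa.trans ((hWaWk.trans hWkU₂).trans hU₂₀))).op (s j) := by
          simp only [Finset.sum_smul, mul_smul, Finset.smul_sum]
          exact Finset.sum_comm
      _ = ∑ l, α l • ∑ k ∈ Finset.univ.filter (fun k : Fin c => k < i),
            O.map (homOfLE ((hW₂Wa.trans hWaWk).trans (hWkU₂.trans hU₂₁))).op (f k) •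
              F.map (homOfLE (hW₂WB l)).op (MM l k) := by
          refine Finset.sum_congr rfl fun l _ => ?_
          congr 1
          have g := congrArg (F.map (homOfLE (hW₂WB l)).op) (hMM l)
          simp only [map_sum, hcomp, resF X F, resO X O] at g
          exact g
      _ = ∑ k ∈ Finset.univ.filter (fun k : Fin c => k < i),
            O.map (homOfLE ((hW₂Wa.trans hWaWk).trans (hWkU₂.trans hU₂₁))).op (f k) •
              (∑ l, α l • F.map (homOfLE (hW₂WB l)).op (MM l k)) := by
          simp only [Finset.smul_sum]
          rw [Finset.sum_comm]
          refine Finset.sum_congr rfl fun k _ => Finset.sum_congr rfl fun l _ => ?_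
          rw [smul_comm]
  choose N hxN hN1 hNP using key
  -- the final open set
  refine ⟨(U₀ ⊓ U₁) ⊓ (Ug ⊓ Finset.univ.inf WA) ⊓ Finset.univ.inf N,
    ⟨⟨hxU₂, ⟨hxUg, mem_finset_inf X _ _ _ fun k _ => hxWA k⟩⟩,
      mem_finset_inf X _ _ _ fun i _ => hxN i⟩, c,
    fun j => O.map (homOfLE
      (((inf_le_left.trans inf_le_left).trans hU₂₁ : _ ≤ U₁))).op (f j),
    fun j => hIres _ _ (hfI j), ?_⟩
  intro y hyU
  have hUU₂ : (U₀ ⊓ U₁) ⊓ (Ug ⊓ Finset.univ.inf WA) ⊓ Finset.univ.inf N ≤ U₀ ⊓ U₁ :=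
    inf_le_left.trans inf_le_left
  have hyU₂ : y ∈ U₀ ⊓ U₁ := hUU₂ hyU
  have hUUg : (U₀ ⊓ U₁) ⊓ (Ug ⊓ Finset.univ.inf WA) ⊓ Finset.univ.inf N ≤ Ug :=
    inf_le_left.trans (inf_le_right.trans inf_le_left)
  have hUWA : ∀ k, (U₀ ⊓ U₁) ⊓ (Ug ⊓ Finset.univ.inf WA) ⊓ Finset.univ.inf N ≤ WA k :=
    fun k => inf_le_left.trans (inf_le_right.trans
      (inf_le_right.trans (Finset.inf_le (Finset.mem_univ k))))
  have hUN : ∀ i, (U₀ ⊓ U₁) ⊓ (Ug ⊓ Finset.univ.inf WA) ⊓ Finset.univ.inf N ≤ N i :=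
    fun i => inf_le_right.trans (Finset.inf_le (Finset.mem_univ i))
  constructor
  · -- local generation at y
    intro V hyV a ha
    obtain ⟨W', hyW', hW'V, hW'Ug, t, ht⟩ := hggen y (hUUg hyU) V hyV a ha
    have hWWA : ∀ k, W' ⊓ ((U₀ ⊓ U₁) ⊓ (Ug ⊓ Finset.univ.inf WA) ⊓ Finset.univ.inf N) ≤ WA k :=
      fun k => inf_le_right.trans (hUWA k)
    have hW1 : W' ⊓ ((U₀ ⊓ U₁) ⊓ (Ug ⊓ Finset.univ.inf WA) ⊓ Finset.univ.inf N) ≤ U₁ :=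
      inf_le_right.trans (hUU₂.trans hU₂₁)
    refine ⟨W' ⊓ ((U₀ ⊓ U₁) ⊓ (Ug ⊓ Finset.univ.inf WA) ⊓ Finset.univ.inf N),
      ⟨hyW', hyU⟩, inf_le_left.trans hW'V, inf_le_right,
      fun j => ∑ k, O.map (homOfLE (inf_le_left :
          W' ⊓ ((U₀ ⊓ U₁) ⊓ (Ug ⊓ Finset.univ.inf WA) ⊓ Finset.univ.inf N) ≤ W')).op (t k) *
        O.map (homOfLE (hWWA k)).op (rA k j), ?_⟩
    have main : O.map (homOfLE (inf_le_left.trans hW'V)).op a =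
        ∑ j, (∑ k, O.map (homOfLE (inf_le_left :
            W' ⊓ ((U₀ ⊓ U₁) ⊓ (Ug ⊓ Finset.univ.inf WA) ⊓ Finset.univ.inf N) ≤ W')).op (t k) *
          O.map (homOfLE (hWWA k)).op (rA k j)) * O.map (homOfLE hW1).op (f j) := by
      calc O.map (homOfLE (inf_le_left.trans hW'V)).op a
          = ∑ k, O.map (homOfLE (inf_le_left :
              W' ⊓ ((U₀ ⊓ U₁) ⊓ (Ug ⊓ Finset.univ.inf WA) ⊓ Finset.univ.inf N) ≤ W')).op (t k) *
            O.map (homOfLE ((hWWA k).trans (hWAg k))).op (g k) := by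
            have d1 := congrArg (O.map (homOfLE (inf_le_left :
              W' ⊓ ((U₀ ⊓ U₁) ⊓ (Ug ⊓ Finset.univ.inf WA) ⊓ Finset.univ.inf N) ≤ W')).op) ht
            simp only [map_sum, map_mul, resO X O] at d1
            exact d1
        _ = ∑ k, O.map (homOfLE (inf_le_left :
              W' ⊓ ((U₀ ⊓ U₁) ⊓ (Ug ⊓ Finset.univ.inf WA) ⊓ Finset.univ.inf N) ≤ W')).op (t k) *
            (∑ j, O.map (homOfLE (hWWA k)).op (rA k j) * O.map (homOfLE hW1).op (f j)) := by
            refine Finset.sum_congr rfl fun k _ => ?_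
            congr 1
            have d2 := congrArg (O.map (homOfLE (hWWA k)).op) (hrA k)
            simp only [map_sum, map_mul, resO X O] at d2
            exact d2
        _ = ∑ j, (∑ k, O.map (homOfLE (inf_le_left :
              W' ⊓ ((U₀ ⊓ U₁) ⊓ (Ug ⊓ Finset.univ.inf WA) ⊓ Finset.univ.inf N) ≤ W')).op (t k) *
            O.map (homOfLE (hWWA k)).op (rA k j)) * O.map (homOfLE hW1).op (f j) := by
            simp only [Finset.mul_sum, Finset.sum_mul]
            rw [Finset.sum_comm]
            refine Finset.sum_congr rfl fun j _ => Finset.sum_congr rfl fun k _ => ?_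
            ring
    refine main.trans (Finset.sum_congr rfl fun j _ => ?_)
    congr 1
    exact (resO X O _ _ _).symm
  · -- regularity at y
    intro i V hyV hVU m hyp
    obtain ⟨W, hyW, hWV, mm, hrel⟩ := hyp
    have hrel2 := hrel
    simp only [resO X O] at hrel2
    obtain ⟨W₂, h1, h2, mm', hres⟩ := hNP i y ((hUN i) hyU) V hyV (hVU.trans (hUN i)) m
      ⟨W, hyW, hWV, mm, hrel2⟩
    refine ⟨W₂, h1, h2, mm', ?_⟩
    simp only [resO X O]
    exact hres
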